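/- Let f be a t-sparse multilinear polynomial on {0,1}^n with real coefficients, S ⊆ [n], and define f_S(x) = Σ_{T ⊇ S} c_T ∏_{i ∈ T∖S} x_i (a polynomial in the variables outside S). Let D be a locally α-smooth distribution. If f_S contains a monomial with non-zero coefficient of degree at most d − |S|, then Pr_{x∼D_{\bar{S}}}[f_S(x) ≠ 0] ≥ (1/(1+α))^{d − |S| + log₂ t}. -/

import Mathlib

open Finset
set_option maxHeartbeats 1000000

variable {n : ℕ}

noncomputable def evalP (b : Finset (Fin n) → ℝ) (x : Fin n → Bool) : ℝ :=
  ∑ U : Finset (Fin n), b U * ∏ i ∈ U, (if x i then (1:ℝ) else 0)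

noncomputable def res0 (b : Finset (Fin n) → ℝ) (i : Fin n) (U : Finset (Fin n)) : ℝ :=
  if i ∈ U then 0 else b U

noncomputable def der (b : Finset (Fin n) → ℝ) (i : Fin n) (U : Finset (Fin n)) : ℝ :=
  if i ∈ U then 0 else b (insert i U)

noncomputable def res1 (b : Finset (Fin n) → ℝ) (i : Fin n) (U : Finset (Fin n)) : ℝ :=
  if i ∈ U then 0 else b U + b (insert i U)

lemma res1_eq (b : Finset (Fin n) → ℝ) (i : Fin n) (U : Finset (Fin n)) :
    res1 b i U = res0 b i U + der b i U := by
  unfold res0 der res1; split <;> simp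

lemma sum_mem_insert (i : Fin n) (f : Finset (Fin n) → ℝ) :
    ∑ U ∈ univ.filter (fun U : Finset (Fin n) => i ∈ U), f U
      = ∑ U ∈ univ.filter (fun U : Finset (Fin n) => i ∉ U), f (insert i U) := by
  apply Finset.sum_bij' (fun U _ => Finset.erase U i) (fun U _ => insert i U)
  · intro a ha; simp at ha ⊢
  · intro a ha; simp at ha ⊢
  · intro a ha; simp at ha; exact Finset.insert_erase ha
  · intro a ha; simp at ha; exact Finset.erase_insert ha
  · intro a ha; simp at ha; rw [Finset.insert_erase ha]

lemma eval_update_false (b : Finset (Fin n) → ℝ) (i : Fin n) (x : Fin n → Bool) :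
    evalP b (Function.update x i false) = evalP (res0 b i) x := by
  unfold evalP
  rw [← Finset.sum_filter_add_sum_filter_not univ (fun U : Finset (Fin n) => i ∈ U)]
  rw [← Finset.sum_filter_add_sum_filter_not univ (fun U : Finset (Fin n) => i ∈ U)
    (f := fun U => res0 b i U * ∏ j ∈ U, (if x j then (1:ℝ) else 0))]
  have h1 : ∑ U ∈ univ.filter (fun U : Finset (Fin n) => i ∈ U),
      b U * ∏ j ∈ U, (if Function.update x i false j then (1:ℝ) else 0) = 0 := by
    apply Finset.sum_eq_zero
    intro U hU
    simp only [mem_filter] at hU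
    have : ∏ j ∈ U, (if Function.update x i false j then (1:ℝ) else 0) = 0 := by
      apply Finset.prod_eq_zero hU.2
      simp [Function.update_self]
    rw [this, mul_zero]
  have h2 : ∑ U ∈ univ.filter (fun U : Finset (Fin n) => i ∈ U),
      res0 b i U * ∏ j ∈ U, (if x j then (1:ℝ) else 0) = 0 := by
    apply Finset.sum_eq_zero
    intro U hU
    simp only [mem_filter] at hU
    simp [res0, hU.2]
  rw [h1, h2]
  congr 1
  apply Finset.sum_congr rfl
  intro U hU
  simp only [mem_filter] at hU
  rw [res0, if_neg hU.2]
  congr 1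
  apply Finset.prod_congr rfl
  intro j hj
  have : j ≠ i := fun h => hU.2 (h ▸ hj)
  rw [Function.update_of_ne this]

lemma eval_update_true (b : Finset (Fin n) → ℝ) (i : Fin n) (x : Fin n → Bool) :
    evalP b (Function.update x i true) = evalP (res1 b i) x := by
  unfold evalP
  rw [← Finset.sum_filter_add_sum_filter_not univ (fun U : Finset (Fin n) => i ∈ U)]
  rw [← Finset.sum_filter_add_sum_filter_not univ (fun U : Finset (Fin n) => i ∈ U)
    (f := fun U => res1 b i U * ∏ j ∈ U, (if x j then (1:ℝ) else 0))]
  have h2 : ∑ U ∈ univ.filter (fun U : Finset (Fin n) => i ∈ U),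
      res1 b i U * ∏ j ∈ U, (if x j then (1:ℝ) else 0) = 0 := by
    apply Finset.sum_eq_zero
    intro U hU
    simp only [mem_filter] at hU
    simp [res1, hU.2]
  rw [h2, zero_add]
  have h1 : ∑ U ∈ univ.filter (fun U : Finset (Fin n) => i ∈ U),
      b U * ∏ j ∈ U, (if Function.update x i true j then (1:ℝ) else 0)
      = ∑ U ∈ univ.filter (fun U : Finset (Fin n) => i ∉ U),
        b (insert i U) * ∏ j ∈ U, (if x j then (1:ℝ) else 0) := by
    rw [sum_mem_insert i (fun U => b U * ∏ j ∈ U, (if Function.update x i true j then (1:ℝ) else 0))]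
    apply Finset.sum_congr rfl
    intro U hU
    simp only [mem_filter] at hU
    congr 1
    rw [Finset.prod_insert hU.2]
    rw [Function.update_self, if_pos rfl, one_mul]
    apply Finset.prod_congr rfl
    intro j hj
    have : j ≠ i := fun h => hU.2 (h ▸ hj)
    rw [Function.update_of_ne this]
  rw [h1]
  have h3 : ∑ U ∈ univ.filter (fun U : Finset (Fin n) => i ∉ U),
      b U * ∏ j ∈ U, (if Function.update x i true j then (1:ℝ) else 0)
      = ∑ U ∈ univ.filter (fun U : Finset (Fin n) => i ∉ U),
        b U * ∏ j ∈ U, (if x j then (1:ℝ) else 0) := by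
    apply Finset.sum_congr rfl
    intro U hU
    simp only [mem_filter] at hU
    congr 1
    apply Finset.prod_congr rfl
    intro j hj
    have : j ≠ i := fun h => hU.2 (h ▸ hj)
    rw [Function.update_of_ne this]
  rw [h3, ← Finset.sum_add_distrib]
  apply Finset.sum_congr rfl
  intro U hU
  simp only [mem_filter] at hU
  rw [res1, if_neg hU.2]
  ring

lemma sum_update_pair (i : Fin n) (F : (Fin n → Bool) → ℝ) :
    ∑ x : Fin n → Bool, (F (Function.update x i false) + F (Function.update x i true))
      = 2 * ∑ x : Fin n → Bool, F x := by
  have key : ∀ x : Fin n → Bool,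
      F (Function.update x i false) + F (Function.update x i true)
        = F x + F (Function.update x i (!(x i))) := by
    intro x
    cases hx : x i
    · have h0 : Function.update x i false = x := by
        rw [← hx]; exact Function.update_eq_self i x
      rw [h0]; norm_num
    · have h0 : Function.update x i true = x := by
        rw [← hx]; exact Function.update_eq_self i x
      rw [h0]; norm_num [add_comm]
  rw [Finset.sum_congr rfl (fun x _ => key x), Finset.sum_add_distrib, two_mul]
  congr 1
  have hinv : Function.Involutive (fun x : Fin n → Bool => Function.update x i (!(x i))) := by
    intro x
    simp only [Function.update_self]
    funext j
    by_cases hj : j = i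
    · subst hj; simp
    · simp [Function.update_of_ne hj]
  exact Fintype.sum_bijective _ hinv.bijective _ _ (fun x => rfl)

lemma hamming_update_le (i : Fin n) (x : Fin n → Bool) (c c' : Bool) :
    hammingDist (Function.update x i c) (Function.update x i c') ≤ 1 := by
  unfold hammingDist
  have : (univ.filter fun j => Function.update x i c j ≠ Function.update x i c' j) ⊆ {i} := by
    intro j hj
    simp only [mem_filter] at hj
    simp only [mem_singleton]
    by_contra hne
    exact hj.2 (by rw [Function.update_of_ne hne, Function.update_of_ne hne])
  calc _ ≤ ({i} : Finset (Fin n)).card := Finset.card_le_card this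
    _ = 1 := Finset.card_singleton i

lemma hamming_update_mono (i : Fin n) (c : Bool) (x x' : Fin n → Bool) :
    hammingDist (Function.update x i c) (Function.update x' i c) ≤ hammingDist x x' := by
  unfold hammingDist
  apply Finset.card_le_card
  intro j hj
  simp only [mem_filter] at hj ⊢
  refine ⟨hj.1, ?_⟩
  intro hne
  by_cases hij : j = i
  · subst hij; exact hj.2 (by simp)
  · exact hj.2 (by rw [Function.update_of_ne hij, Function.update_of_ne hij, hne])


lemma card_res0_der (b : Finset (Fin n) → ℝ) (i : Fin n) :
    (univ.filter (fun U : Finset (Fin n) => res0 b i U ≠ 0)).card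
      + (univ.filter (fun U : Finset (Fin n) => der b i U ≠ 0)).card
      ≤ (univ.filter (fun U : Finset (Fin n) => b U ≠ 0)).card := by
  set A := univ.filter (fun U : Finset (Fin n) => b U ≠ 0 ∧ i ∉ U) with hA
  set B := univ.filter (fun U : Finset (Fin n) => b U ≠ 0 ∧ i ∈ U) with hB
  have h1 : (univ.filter (fun U : Finset (Fin n) => res0 b i U ≠ 0)).card ≤ A.card := by
    apply Finset.card_le_card
    intro U hU
    rw [hA]
    simp only [mem_filter, res0] at hU ⊢
    by_cases h : i ∈ U
    · simp [h] at hU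
    · simp [h] at hU ⊢; exact hU
  have h2 : (univ.filter (fun U : Finset (Fin n) => der b i U ≠ 0)).card ≤ B.card := by
    apply Finset.card_le_card_of_injOn (fun U => insert i U)
    · intro U hU
      rw [hB]
      simp only [mem_filter, der] at hU ⊢
      by_cases h : i ∈ U
      · simp [h] at hU
      · simp [h] at hU ⊢; exact hU
    · intro U hU U' hU' heq
      simp only [coe_filter, Set.mem_setOf_eq, der] at hU hU'
      by_cases h : i ∈ U
      · simp [h] at hU
      · by_cases h' : i ∈ U'
        · simp [h'] at hU'
        · have := congrArg (fun s => Finset.erase s i) heq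
          simpa [Finset.erase_insert h, Finset.erase_insert h'] using this
  have h3 : A.card + B.card ≤ (univ.filter (fun U : Finset (Fin n) => b U ≠ 0)).card := by
    rw [← Finset.card_union_of_disjoint]
    · apply Finset.card_le_card
      intro U hU
      simp only [mem_union, mem_filter, hA, hB] at hU ⊢
      rcases hU with h | h
      · exact ⟨h.1, h.2.1⟩
      · exact ⟨h.1, h.2.1⟩
    · rw [Finset.disjoint_left]
      intro U hU hU'
      simp only [mem_filter, hA, hB] at hU hU'
      exact hU.2.2 hU'.2.2
  omega

lemma card_res1_le (b : Finset (Fin n) → ℝ) (i : Fin n) :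
    (univ.filter (fun U : Finset (Fin n) => res1 b i U ≠ 0)).card
      ≤ (univ.filter (fun U : Finset (Fin n) => b U ≠ 0)).card := by
  apply Finset.card_le_card_of_injOn (fun U => if b U ≠ 0 then U else insert i U)
  · intro U hU
    simp only [mem_coe, mem_filter] at hU ⊢; simp only [res1] at hU ⊢
    by_cases h : i ∈ U
    · simp [h] at hU
    · simp only [h, if_false] at hU
      by_cases hb : b U ≠ 0
      · simp [hb]
      · simp only [hb, if_false]
        refine ⟨mem_univ _, ?_⟩
        push_neg at hb
        intro hc
        exact hU.2 (by rw [hb, hc, add_zero])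
  · intro U hU U' hU' heq
    simp only [coe_filter, Set.mem_setOf_eq, res1] at hU hU'
    have hiU : i ∉ U := by intro h; simp [h] at hU
    have hiU' : i ∉ U' := by intro h; simp [h] at hU'
    simp only at heq
    by_cases hb : b U ≠ 0 <;> by_cases hb' : b U' ≠ 0
    · simpa [hb, hb'] using heq
    · rw [if_pos hb, if_neg hb'] at heq
      exfalso
      exact hiU (heq ▸ Finset.mem_insert_self i U')
    · rw [if_neg hb, if_pos hb'] at heq
      exfalso
      exact hiU' (heq ▸ Finset.mem_insert_self i U)
    · rw [if_neg hb, if_neg hb'] at heq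
      have := congrArg (fun s => Finset.erase s i) heq
      simpa [Finset.erase_insert hiU, Finset.erase_insert hiU'] using this



lemma eval_of_const (b : Finset (Fin n) → ℝ) (hall : ∀ U, b U ≠ 0 → U = ∅)
    (x : Fin n → Bool) : evalP b x = b ∅ := by
  unfold evalP
  rw [Finset.sum_eq_single ∅]
  · simp
  · intro U _ hne
    have : b U = 0 := by
      by_contra hb
      exact hne (hall U hb)
    simp [this]
  · intro h
    exact absurd (Finset.mem_univ _) h

lemma main_const (α : ℝ) (hα : 1 ≤ α) (b : Finset (Fin n) → ℝ)
    (hall : ∀ U, b U ≠ 0 → U = ∅)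
    (μ : (Fin n → Bool) → ℝ) (hμ0 : ∀ x, 0 ≤ μ x)
    (T : Finset (Fin n)) (hT : b T ≠ 0) :
    (1/(1+α)) ^ ((T.card : ℝ) + Real.logb 2 ((univ.filter (fun U => b U ≠ 0)).card))
        * (∑ x, μ x)
      ≤ ∑ x, (if evalP b x ≠ 0 then μ x else 0) := by
  have hT0 : T = ∅ := hall T hT
  subst hT0
  have hth : (1:ℕ) ≤ (univ.filter (fun U => b U ≠ 0)).card := by
    rw [Nat.one_le_iff_ne_zero, ← Nat.pos_iff_ne_zero, Finset.card_pos]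
    exact ⟨∅, by simp [hT]⟩
  have hexp : (0:ℝ) ≤ ((∅ : Finset (Fin n)).card : ℝ)
      + Real.logb 2 ((univ.filter (fun U => b U ≠ 0)).card) := by
    have : (0:ℝ) ≤ Real.logb 2 ((univ.filter (fun U => b U ≠ 0)).card) :=
      Real.logb_nonneg (by norm_num) (by exact_mod_cast hth)
    simp only [Finset.card_empty, Nat.cast_zero, zero_add]
    exact this
  have hq0 : (0:ℝ) < 1/(1+α) := by positivity
  have hq1 : 1/(1+α) ≤ 1 := by
    rw [div_le_one (by linarith)]; linarith
  have hρ : (1/(1+α)) ^ ((∅ : Finset (Fin n)).card : ℝ)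
      + 0 ≤ 1 := by simp
  have hrle : (1/(1+α)) ^ (((∅ : Finset (Fin n)).card : ℝ)
      + Real.logb 2 ((univ.filter (fun U => b U ≠ 0)).card)) ≤ 1 :=
    Real.rpow_le_one hq0.le hq1 hexp
  have hRHS : ∑ x, (if evalP b x ≠ 0 then μ x else 0) = ∑ x, μ x := by
    apply Finset.sum_congr rfl
    intro x _
    rw [if_pos]
    rw [eval_of_const b hall]
    exact hT
  rw [hRHS]
  calc _ ≤ 1 * (∑ x, μ x) := by
        apply mul_le_mul_of_nonneg_right hrle
        exact Finset.sum_nonneg fun x _ => hμ0 x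
    _ = ∑ x, μ x := one_mul _

lemma evalP_res1_split (b : Finset (Fin n) → ℝ) (i : Fin n) (x : Fin n → Bool) :
    evalP (res1 b i) x = evalP (res0 b i) x + evalP (der b i) x := by
  unfold evalP
  rw [← Finset.sum_add_distrib]
  apply Finset.sum_congr rfl
  intro U _
  rw [res1_eq]
  ring

lemma main_lemma (α : ℝ) (hα : 1 ≤ α) :
    ∀ (v : ℕ) (V : Finset (Fin n)) (b : Finset (Fin n) → ℝ) (T : Finset (Fin n))
      (μ : (Fin n → Bool) → ℝ),
      V.card ≤ v →
      (∀ U, b U ≠ 0 → U ⊆ V) →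
      b T ≠ 0 → (∀ U, U ⊂ T → b U = 0) →
      (∀ x, 0 ≤ μ x) →
      (∀ x x', hammingDist x x' ≤ 1 → μ x ≤ α * μ x') →
      (1/(1+α)) ^ ((T.card : ℝ)
          + Real.logb 2 ((univ.filter (fun U => b U ≠ 0)).card)) * (∑ x, μ x)
        ≤ ∑ x, (if evalP b x ≠ 0 then μ x else 0) := by
  have hL : (0:ℝ) < 1 + α := by linarith
  have hq0 : (0:ℝ) < 1/(1+α) := by positivity
  have hq1 : 1/(1+α) ≤ 1 := by rw [div_le_one hL]; linarith
  intro v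
  induction v with
  | zero =>
    intro V b T μ hcard hsupp hT hmin hμ0 hsm
    have hV : V = ∅ := Finset.card_eq_zero.mp (Nat.le_zero.mp hcard)
    exact main_const α hα b
      (fun U hU => Finset.subset_empty.mp (hV ▸ hsupp U hU)) μ hμ0 T hT
  | succ v ih =>
    intro V b T μ hcard hsupp hT hmin hμ0 hsm
    set q := 1/(1+α) with hq
    set t := (univ.filter (fun U => b U ≠ 0)).card with ht
    have htpos : 1 ≤ t := by
      rw [ht, Nat.one_le_iff_ne_zero, ← Nat.pos_iff_ne_zero, Finset.card_pos]
      exact ⟨T, by simp [hT]⟩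
    set F : (Fin n → Bool) → ℝ := fun y => if evalP b y ≠ 0 then μ y else 0 with hF
    have hFnn : ∀ y, 0 ≤ F y := by
      intro y; rw [hF]; dsimp only; split
      · exact hμ0 y
      · exact le_refl 0
    have hμsum_nn : (0:ℝ) ≤ ∑ x, μ x := Finset.sum_nonneg fun x _ => hμ0 x
    rcases T.eq_empty_or_nonempty with hTe | hTne
    · -- T = ∅, constant term nonzero
      subst hTe
      rcases V.eq_empty_or_nonempty with hVe | hVne
      · exact main_const α hα b
          (fun U hU => Finset.subset_empty.mp (hVe ▸ hsupp U hU)) μ hμ0 ∅ hT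
      · obtain ⟨i, hiV⟩ := hVne
        set μ0 : (Fin n → Bool) → ℝ := fun x => μ (Function.update x i false) with hμ0d
        set μ1 : (Fin n → Bool) → ℝ := fun x => μ (Function.update x i true) with hμ1d
        have hμ0nn : ∀ x, 0 ≤ μ0 x := fun x => hμ0 _
        have hμ1nn : ∀ x, 0 ≤ μ1 x := fun x => hμ0 _
        have hsm0 : ∀ x x', hammingDist x x' ≤ 1 → μ0 x ≤ α * μ0 x' :=
          fun x x' h => hsm _ _ ((hamming_update_mono i false x x').trans h)
        have hsm1 : ∀ x x', hammingDist x x' ≤ 1 → μ1 x ≤ α * μ1 x' :=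
          fun x x' h => hsm _ _ ((hamming_update_mono i true x x').trans h)
        have hpt01 : ∀ x, μ0 x ≤ α * μ1 x :=
          fun x => hsm _ _ (hamming_update_le i x false true)
        have hpt10 : ∀ x, μ1 x ≤ α * μ0 x :=
          fun x => hsm _ _ (hamming_update_le i x true false)
        have hsum2 : ∑ x, (μ0 x + μ1 x) = 2 * ∑ x, μ x := sum_update_pair i μ
        have h2P : ∑ x, (F (Function.update x i false) + F (Function.update x i true))
            = 2 * univ.sum F := sum_update_pair i F
        have hF0 : ∀ x, F (Function.update x i false)
            = (if evalP (res0 b i) x ≠ 0 then μ0 x else 0) := by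
          intro x; rw [hF]; dsimp only; rw [eval_update_false]
        have hF1 : ∀ x, F (Function.update x i true)
            = (if evalP (res1 b i) x ≠ 0 then μ1 x else 0) := by
          intro x; rw [hF]; dsimp only; rw [eval_update_true]
        have hVe : (V.erase i).card ≤ v := by
          rw [Finset.card_erase_of_mem hiV]; omega
        have hb0supp : ∀ U, res0 b i U ≠ 0 → U ⊆ V.erase i := by
          intro U hU
          rw [res0] at hU
          by_cases hiU : i ∈ U
          · simp [hiU] at hU
          · rw [if_neg hiU] at hU
            exact Finset.subset_erase.mpr ⟨hsupp U hU, hiU⟩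
        have hb1supp : ∀ U, res1 b i U ≠ 0 → U ⊆ V.erase i := by
          intro U hU
          rw [res1] at hU
          by_cases hiU : i ∈ U
          · simp [hiU] at hU
          · rw [if_neg hiU] at hU
            have hor : b U ≠ 0 ∨ b (insert i U) ≠ 0 := by
              by_contra hc; push_neg at hc
              exact hU (by rw [hc.1, hc.2, add_zero])
            have hUV : U ⊆ V := by
              rcases hor with h | h
              · exact hsupp U h
              · exact (Finset.subset_insert i U).trans (hsupp _ h)
            exact Finset.subset_erase.mpr ⟨hUV, hiU⟩
        have hdersupp : ∀ U, der b i U ≠ 0 → U ⊆ V.erase i := by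
          intro U hU
          rw [der] at hU
          by_cases hiU : i ∈ U
          · simp [hiU] at hU
          · rw [if_neg hiU] at hU
            exact Finset.subset_erase.mpr
              ⟨(Finset.subset_insert i U).trans (hsupp _ hU), hiU⟩
        have hminemp : ∀ (g : Finset (Fin n) → ℝ) (U : Finset (Fin n)),
            U ⊂ (∅ : Finset (Fin n)) → g U = 0 := by
          intro g U hU
          exact absurd hU (Finset.not_ssubset_empty U)
        have hb0e : res0 b i ∅ = b ∅ := by rw [res0, if_neg (Finset.notMem_empty i)]
        have hcard0 : ((∅ : Finset (Fin n)).card : ℝ) = 0 := by simp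
        by_cases hbi : b ∅ + b (insert i ∅) ≠ 0
        · -- Case B1 : both restrictions have nonzero constant term
          set t0 := (univ.filter (fun U => res0 b i U ≠ 0)).card with ht0
          set t1 := (univ.filter (fun U => res1 b i U ≠ 0)).card with ht1
          have ht0pos : 1 ≤ t0 := by
            rw [ht0, Nat.one_le_iff_ne_zero, ← Nat.pos_iff_ne_zero, Finset.card_pos]
            exact ⟨∅, by simp [hb0e, hT]⟩
          have ht1pos : 1 ≤ t1 := by
            rw [ht1, Nat.one_le_iff_ne_zero, ← Nat.pos_iff_ne_zero, Finset.card_pos]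
            refine ⟨∅, ?_⟩
            simp only [mem_filter, mem_univ, true_and]; simp only [res1]
            rw [if_neg (Finset.notMem_empty i)]
            exact hbi
          have ht0le : t0 ≤ t := by
            apply Finset.card_le_card
            intro U hU
            simp only [mem_filter, mem_univ, true_and] at hU ⊢; simp only [res0] at hU ⊢
            by_cases hiU : i ∈ U
            · simp [hiU] at hU
            · rwa [if_neg hiU] at hU
          have ht1le : t1 ≤ t := card_res1_le b i
          have hIH0 := ih (V.erase i) (res0 b i) ∅ μ0 hVe hb0supp
            (by rw [hb0e]; exact hT) (hminemp _) hμ0nn hsm0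
          have hIH1 := ih (V.erase i) (res1 b i) ∅ μ1 hVe hb1supp
            (by rw [res1, if_neg (Finset.notMem_empty i)]; exact hbi)
            (hminemp _) hμ1nn hsm1
          rw [hcard0, zero_add] at hIH0 hIH1 ⊢
          have hmono0 : q ^ Real.logb 2 (t:ℝ) ≤ q ^ Real.logb 2 (t0:ℝ) :=
            Real.rpow_le_rpow_of_exponent_ge hq0 hq1
              (Real.logb_le_logb_of_le (by norm_num) (by exact_mod_cast ht0pos)
                (by exact_mod_cast ht0le))
          have hmono1 : q ^ Real.logb 2 (t:ℝ) ≤ q ^ Real.logb 2 (t1:ℝ) :=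
            Real.rpow_le_rpow_of_exponent_ge hq0 hq1
              (Real.logb_le_logb_of_le (by norm_num) (by exact_mod_cast ht1pos)
                (by exact_mod_cast ht1le))
          have hμ0sum_nn : (0:ℝ) ≤ ∑ x, μ0 x := Finset.sum_nonneg fun x _ => hμ0nn x
          have hμ1sum_nn : (0:ℝ) ≤ ∑ x, μ1 x := Finset.sum_nonneg fun x _ => hμ1nn x
          have hsplit : 2 * univ.sum F
              = (∑ x, (if evalP (res0 b i) x ≠ 0 then μ0 x else 0))
                + (∑ x, (if evalP (res1 b i) x ≠ 0 then μ1 x else 0)) := by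
            rw [← h2P, ← Finset.sum_add_distrib]
            exact Finset.sum_congr rfl fun x _ => by rw [hF0, hF1]
          have hc0 : q ^ Real.logb 2 (t:ℝ) * (∑ x, μ0 x)
              ≤ ∑ x, (if evalP (res0 b i) x ≠ 0 then μ0 x else 0) :=
            le_trans (mul_le_mul_of_nonneg_right hmono0 hμ0sum_nn) hIH0
          have hc1 : q ^ Real.logb 2 (t:ℝ) * (∑ x, μ1 x)
              ≤ ∑ x, (if evalP (res1 b i) x ≠ 0 then μ1 x else 0) :=
            le_trans (mul_le_mul_of_nonneg_right hmono1 hμ1sum_nn) hIH1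
          have hfin : q ^ Real.logb 2 (t:ℝ) * (2 * ∑ x, μ x) ≤ 2 * univ.sum F := by
            rw [← hsum2, Finset.sum_add_distrib, hsplit, mul_add]
            exact add_le_add hc0 hc1
          have heq2 : q ^ Real.logb 2 (t:ℝ) * (2 * ∑ x, μ x)
              = 2 * (q ^ Real.logb 2 (t:ℝ) * (∑ x, μ x)) := by ring
          linarith [hfin, heq2]
        · -- Case B2 : b {i} = - b ∅
          push_neg at hbi
          set t0 := (univ.filter (fun U => res0 b i U ≠ 0)).card with ht0
          set tD := (univ.filter (fun U => der b i U ≠ 0)).card with htD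
          have hsum0D : t0 + tD ≤ t := card_res0_der b i
          set ν : (Fin n → Bool) → ℝ := fun x => μ0 x + μ1 x with hνd
          have hνnn : ∀ x, 0 ≤ ν x := fun x => add_nonneg (hμ0nn x) (hμ1nn x)
          have hsmν : ∀ x x', hammingDist x x' ≤ 1 → ν x ≤ α * ν x' := by
            intro x x' h
            have := hsm0 x x' h
            have := hsm1 x x' h
            rw [hνd]; dsimp only; rw [mul_add]
            exact add_le_add (hsm0 x x' h) (hsm1 x x' h)
          have key : ∀ g : Finset (Fin n) → ℝ, g ∅ ≠ 0 →
              (∀ U, g U ≠ 0 → U ⊆ V.erase i) →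
              (2 * (univ.filter (fun U => g U ≠ 0)).card ≤ t) →
              (∀ x, evalP g x ≠ 0 → evalP (res0 b i) x ≠ 0 ∨ evalP (res1 b i) x ≠ 0) →
              q ^ (((∅:Finset (Fin n)).card : ℝ) + Real.logb 2 (t:ℝ)) * (∑ x, μ x)
                ≤ univ.sum F := by
            intro g hg0 hgsupp hgcard hgor
            set tg := (univ.filter (fun U => g U ≠ 0)).card with htg
            have htgpos : 1 ≤ tg := by
              rw [htg, Nat.one_le_iff_ne_zero, ← Nat.pos_iff_ne_zero, Finset.card_pos]
              exact ⟨∅, by simp [hg0]⟩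
            have hIHg := ih (V.erase i) g ∅ ν hVe hgsupp hg0 (hminemp _) hνnn hsmν
            rw [hcard0, zero_add] at hIHg ⊢
            -- pointwise comparison
            have hpt : ∀ x, q * (if evalP g x ≠ 0 then ν x else 0)
                ≤ F (Function.update x i false) + F (Function.update x i true) := by
              intro x
              by_cases he : evalP g x ≠ 0
              · rw [if_pos he]
                rcases hgor x he with h0 | h1
                · have hFx : F (Function.update x i false) = μ0 x := by
                    rw [hF0, if_pos h0]
                  have hql : q * ν x ≤ μ0 x := by
                    rw [hq, one_div_mul_eq_div, div_le_iff₀ hL]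
                    have := hpt10 x
                    rw [hνd]; dsimp only
                    nlinarith [hμ0nn x]
                  have := hFnn (Function.update x i true)
                  linarith [hql, hFx ▸ le_refl (μ0 x)]
                · have hFx : F (Function.update x i true) = μ1 x := by
                    rw [hF1, if_pos h1]
                  have hql : q * ν x ≤ μ1 x := by
                    rw [hq, one_div_mul_eq_div, div_le_iff₀ hL]
                    have := hpt01 x
                    rw [hνd]; dsimp only
                    nlinarith [hμ1nn x]
                  have := hFnn (Function.update x i false)
                  linarith [hql]
              · rw [if_neg he, mul_zero]
                exact add_nonneg (hFnn _) (hFnn _)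
            have hsumpt : q * (∑ x, (if evalP g x ≠ 0 then ν x else 0))
                ≤ 2 * univ.sum F := by
              rw [← sum_update_pair i F, Finset.mul_sum]
              exact Finset.sum_le_sum fun x _ => hpt x
            have hνsum : ∑ x, ν x = 2 * ∑ x, μ x := sum_update_pair i μ
            have hchain : q * (q ^ Real.logb 2 (tg:ℝ) * (2 * ∑ x, μ x))
                ≤ 2 * univ.sum F := by
              apply le_trans _ hsumpt
              apply mul_le_mul_of_nonneg_left _ hq0.le
              rw [← hνsum]
              exact hIHg
            have hexp : q * q ^ Real.logb 2 (tg:ℝ)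
                = q ^ (1 + Real.logb 2 (tg:ℝ)) := by
              rw [add_comm, Real.rpow_add_one hq0.ne', mul_comm]
            have hexple : Real.logb 2 (t:ℝ) ≥ 1 + Real.logb 2 (tg:ℝ) := by
              have h2tg : (2:ℝ) * (tg:ℝ) ≤ (t:ℝ) := by
                have : 2 * tg ≤ t := hgcard
                exact_mod_cast this
              have htgR : (0:ℝ) < (tg:ℝ) := by exact_mod_cast htgpos
              have hlogb : Real.logb 2 ((2:ℝ) * tg) ≤ Real.logb 2 (t:ℝ) :=
                Real.logb_le_logb_of_le (by norm_num)
                  (mul_pos (by norm_num) htgR) h2tg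
              rw [Real.logb_mul (by norm_num) (by
                  have : (0:ℝ) < (tg:ℝ) := by exact_mod_cast htgpos
                  linarith)] at hlogb
              rw [Real.logb_self_eq_one (by norm_num)] at hlogb
              linarith
            have hmonot : q ^ Real.logb 2 (t:ℝ)
                ≤ q ^ (1 + Real.logb 2 (tg:ℝ)) :=
              Real.rpow_le_rpow_of_exponent_ge hq0 hq1 hexple
            have : q ^ Real.logb 2 (t:ℝ) * (2 * ∑ x, μ x) ≤ 2 * univ.sum F := by
              calc q ^ Real.logb 2 (t:ℝ) * (2 * ∑ x, μ x)
                  ≤ q ^ (1 + Real.logb 2 (tg:ℝ)) * (2 * ∑ x, μ x) := by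
                    apply mul_le_mul_of_nonneg_right hmonot
                    linarith
                _ = q * (q ^ Real.logb 2 (tg:ℝ) * (2 * ∑ x, μ x)) := by
                    rw [← hexp]; ring
                _ ≤ 2 * univ.sum F := hchain
            have heq2 : q ^ Real.logb 2 (t:ℝ) * (2 * ∑ x, μ x)
                = 2 * (q ^ Real.logb 2 (t:ℝ) * (∑ x, μ x)) := by ring
            linarith [this, heq2]
          rcases le_total t0 tD with hc | hc
          · -- use res0
            apply key (res0 b i) (by rw [hb0e]; exact hT) hb0supp
              (by omega) (fun x hx => Or.inl hx)
          · -- use der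
            have hderC : der b i ∅ ≠ 0 := by
              rw [der, if_neg (Finset.notMem_empty i)]
              intro h
              exact hT (by linarith [hbi, h])
            apply key (der b i) hderC hdersupp (by omega)
            intro x hx
            by_cases h0 : evalP (res0 b i) x ≠ 0
            · exact Or.inl h0
            · push_neg at h0
              right
              rw [evalP_res1_split, h0, zero_add]
              exact hx
    · -- Case A : T nonempty, pay one step on i ∈ T
      obtain ⟨i, hiT⟩ := hTne
      have hiV : i ∈ V := hsupp T hT hiT
      set μ0 : (Fin n → Bool) → ℝ := fun x => μ (Function.update x i false) with hμ0d
      set μ1 : (Fin n → Bool) → ℝ := fun x => μ (Function.update x i true) with hμ1d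
      have hμ1nn : ∀ x, 0 ≤ μ1 x := fun x => hμ0 _
      have hsm1 : ∀ x x', hammingDist x x' ≤ 1 → μ1 x ≤ α * μ1 x' :=
        fun x x' h => hsm _ _ ((hamming_update_mono i true x x').trans h)
      have hpt01 : ∀ x, μ0 x ≤ α * μ1 x :=
        fun x => hsm _ _ (hamming_update_le i x false true)
      set T' := T.erase i with hT'
      have hTcard : T.card = T'.card + 1 := by
        rw [hT', Finset.card_erase_of_mem hiT]
        have : 1 ≤ T.card := Finset.card_pos.mpr ⟨i, hiT⟩
        omega
      have hb1T' : res1 b i T' ≠ 0 := by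
        rw [res1, if_neg (Finset.notMem_erase i T), hT', Finset.insert_erase hiT]
        rw [hmin (T.erase i) (Finset.erase_ssubset hiT), zero_add]
        exact hT
      have hb1min : ∀ U, U ⊂ T' → res1 b i U = 0 := by
        intro U hU
        rw [res1]
        by_cases hiU : i ∈ U
        · rw [if_pos hiU]
        · rw [if_neg hiU]
          have hUT : U ⊂ T := hU.trans_subset (Finset.erase_subset i T)
          have h1 : b U = 0 := hmin U hUT
          have h2 : b (insert i U) = 0 := by
            apply hmin
            have hsub : insert i U ⊆ T := by
              rw [← Finset.insert_erase hiT]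
              exact Finset.insert_subset_insert i hU.subset
            have hne : insert i U ≠ T := by
              intro he
              have hcu : (insert i U).card = U.card + 1 :=
                Finset.card_insert_of_notMem hiU
              have hlt : U.card < T'.card := Finset.card_lt_card hU
              have := congrArg Finset.card he
              omega
            exact Finset.ssubset_iff_subset_ne.mpr ⟨hsub, hne⟩
          rw [h1, h2, add_zero]
      have hVe : (V.erase i).card ≤ v := by
        rw [Finset.card_erase_of_mem hiV]; omega
      have hb1supp : ∀ U, res1 b i U ≠ 0 → U ⊆ V.erase i := by
        intro U hU
        rw [res1] at hU
        by_cases hiU : i ∈ U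
        · simp [hiU] at hU
        · rw [if_neg hiU] at hU
          have hor : b U ≠ 0 ∨ b (insert i U) ≠ 0 := by
            by_contra hcon; push_neg at hcon
            exact hU (by rw [hcon.1, hcon.2, add_zero])
          have hUV : U ⊆ V := by
            rcases hor with h | h
            · exact hsupp U h
            · exact (Finset.subset_insert i U).trans (hsupp _ h)
          exact Finset.subset_erase.mpr ⟨hUV, hiU⟩
      have hIH := ih (V.erase i) (res1 b i) T' μ1 hVe hb1supp hb1T' hb1min hμ1nn hsm1
      set t1 := (univ.filter (fun U => res1 b i U ≠ 0)).card with ht1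
      have ht1pos : 1 ≤ t1 := by
        rw [ht1, Nat.one_le_iff_ne_zero, ← Nat.pos_iff_ne_zero, Finset.card_pos]
        exact ⟨T', by simp [hb1T']⟩
      have ht1le : t1 ≤ t := card_res1_le b i
      have hF1 : ∀ x, F (Function.update x i true)
          = (if evalP (res1 b i) x ≠ 0 then μ1 x else 0) := by
        intro x; rw [hF]; dsimp only; rw [eval_update_true]
      have h2P : ∑ x, (F (Function.update x i false) + F (Function.update x i true))
          = 2 * univ.sum F := sum_update_pair i F
      have hdrop : ∑ x, (if evalP (res1 b i) x ≠ 0 then μ1 x else 0)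
          ≤ 2 * univ.sum F := by
        rw [← h2P]
        apply Finset.sum_le_sum
        intro x _
        rw [← hF1 x]
        have := hFnn (Function.update x i false)
        linarith
      have hμ1low : q * (2 * ∑ x, μ x) ≤ ∑ x, μ1 x := by
        rw [hq, one_div_mul_eq_div, div_le_iff₀ hL]
        have hs2 : ∑ x, (μ0 x + μ1 x) = 2 * ∑ x, μ x := sum_update_pair i μ
        have hle : ∑ x, (μ0 x + μ1 x) ≤ ∑ x, (1+α) * μ1 x := by
          apply Finset.sum_le_sum
          intro x _
          have := hpt01 x
          have := hμ1nn x
          nlinarith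
        rw [hs2, ← Finset.mul_sum] at hle
        linarith
      have hμ1sum_nn : (0:ℝ) ≤ ∑ x, μ1 x := Finset.sum_nonneg fun x _ => hμ1nn x
      -- combine
      have hchain : q ^ ((T'.card:ℝ) + Real.logb 2 (t1:ℝ)) * (q * (2 * ∑ x, μ x))
          ≤ 2 * univ.sum F := by
        calc q ^ ((T'.card:ℝ) + Real.logb 2 (t1:ℝ)) * (q * (2 * ∑ x, μ x))
            ≤ q ^ ((T'.card:ℝ) + Real.logb 2 (t1:ℝ)) * (∑ x, μ1 x) := by
              apply mul_le_mul_of_nonneg_left hμ1low (Real.rpow_nonneg hq0.le _)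
          _ ≤ ∑ x, (if evalP (res1 b i) x ≠ 0 then μ1 x else 0) := hIH
          _ ≤ 2 * univ.sum F := hdrop
      have hexp1 : q ^ ((T'.card:ℝ) + Real.logb 2 (t1:ℝ)) * q
          = q ^ ((T.card:ℝ) + Real.logb 2 (t1:ℝ)) := by
        rw [← Real.rpow_add_one hq0.ne']
        congr 1
        have : (T.card:ℝ) = (T'.card:ℝ) + 1 := by exact_mod_cast hTcard
        rw [this]; ring
      have hmonot : q ^ ((T.card:ℝ) + Real.logb 2 (t:ℝ))
          ≤ q ^ ((T.card:ℝ) + Real.logb 2 (t1:ℝ)) := by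
        apply Real.rpow_le_rpow_of_exponent_ge hq0 hq1
        have : Real.logb 2 (t1:ℝ) ≤ Real.logb 2 (t:ℝ) :=
          Real.logb_le_logb_of_le (by norm_num) (by exact_mod_cast ht1pos)
            (by exact_mod_cast ht1le)
        linarith
      have hfin : q ^ ((T.card:ℝ) + Real.logb 2 (t:ℝ)) * (2 * ∑ x, μ x)
          ≤ 2 * univ.sum F := by
        calc q ^ ((T.card:ℝ) + Real.logb 2 (t:ℝ)) * (2 * ∑ x, μ x)
            ≤ q ^ ((T.card:ℝ) + Real.logb 2 (t1:ℝ)) * (2 * ∑ x, μ x) := by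
              apply mul_le_mul_of_nonneg_right hmonot
              linarith
          _ = q ^ ((T'.card:ℝ) + Real.logb 2 (t1:ℝ)) * (q * (2 * ∑ x, μ x)) := by
              rw [← hexp1]; ring
          _ ≤ 2 * univ.sum F := hchain
      have heq2 : q ^ ((T.card:ℝ) + Real.logb 2 (t:ℝ)) * (2 * ∑ x, μ x)
          = 2 * (q ^ ((T.card:ℝ) + Real.logb 2 (t:ℝ)) * (∑ x, μ x)) := by ring
      linarith [hfin, heq2]


/-- If the quotient polynomial f_S of a t-sparse multilinear
polynomial f has a non-zero monomial of degree at most d − |S|, then f_S is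
non-zero with probability at least (1/(1+α))^{d−|S|+log₂ t} under (the marginal
of) any locally α-smooth distribution. -/
theorem quotient_poly_nonzero_prob (n t d : ℕ) (ht : 2 ≤ t)
    (c : Finset (Fin n) → ℝ)
    (hsparse : (univ.filter (fun T : Finset (Fin n) => c T ≠ 0)).card ≤ t)
    (S : Finset (Fin n)) (hSd : S.card ≤ d)
    (hmono : ∃ T ∈ Sᶜ.powerset, c (S ∪ T) ≠ 0 ∧ T.card ≤ d - S.card)
    (α : ℝ) (hα : 1 ≤ α)
    (D : (Fin n → Bool) → ℝ) (hD0 : ∀ x, 0 ≤ D x) (hD1 : ∑ x, D x = 1)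
    (hsmooth : ∀ x x' : Fin n → Bool, hammingDist x x' = 1 → D x ≤ α * D x') :
    (1 / (1 + α)) ^ ((d : ℝ) - S.card + Real.logb 2 t) ≤
      ∑ x ∈ univ.filter (fun x : Fin n → Bool =>
        (∑ T ∈ Sᶜ.powerset, c (S ∪ T) * ∏ i ∈ T, (if x i then (1 : ℝ) else 0)) ≠ 0),
        D x := by
  classical
  have hL : (0:ℝ) < 1 + α := by linarith
  have hq0 : (0:ℝ) < 1/(1+α) := by positivity
  have hq1 : 1/(1+α) ≤ 1 := by rw [div_le_one hL]; linarith
  obtain ⟨T₀, hT₀mem, hT₀c, hT₀card⟩ := hmono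
  rw [Finset.mem_powerset] at hT₀mem
  set b : Finset (Fin n) → ℝ := fun U => if U ⊆ Sᶜ then c (S ∪ U) else 0 with hb
  have hbT₀ : b T₀ ≠ 0 := by rw [hb]; dsimp only; rw [if_pos hT₀mem]; exact hT₀c
  have hne : (T₀.powerset.filter (fun U => b U ≠ 0)).Nonempty := by
    refine ⟨T₀, ?_⟩
    simp only [Finset.mem_filter, Finset.mem_powerset]
    exact ⟨Finset.Subset.refl T₀, hbT₀⟩
  obtain ⟨Ts, hTsmem, hTsmin⟩ : ∃ m ∈ T₀.powerset.filter (fun U => b U ≠ 0),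
      ∀ x ∈ T₀.powerset.filter (fun U => b U ≠ 0), ¬x < m := by
    obtain ⟨m, hm⟩ := Finset.exists_minimal hne
    exact ⟨m, hm.1, fun x hx hlt => lt_irrefl x (lt_of_lt_of_le hlt (hm.2 hx hlt.le))⟩
  simp only [Finset.mem_filter, Finset.mem_powerset] at hTsmem
  have hmin : ∀ U, U ⊂ Ts → b U = 0 := by
    intro U hU
    by_contra hbU
    exact hTsmin U
      (Finset.mem_filter.mpr
        ⟨Finset.mem_powerset.mpr (hU.subset.trans hTsmem.1), hbU⟩)
      (Finset.lt_iff_ssubset.mpr hU)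
  have hsm' : ∀ x x', hammingDist x x' ≤ 1 → D x ≤ α * D x' := by
    intro x x' h
    rcases Nat.le_one_iff_eq_zero_or_eq_one.mp h with h0 | h1
    · have hxx : x = x' := hammingDist_eq_zero.mp h0
      subst hxx
      nlinarith [hD0 x]
    · exact hsmooth x x' h1
  have hmain := main_lemma α hα ((univ : Finset (Fin n)).card) univ b Ts D
    le_rfl (fun U _ => Finset.subset_univ U) hTsmem.2 hmin hD0 hsm'
  rw [hD1, mul_one] at hmain
  -- identify the evaluation
  have hevalid : ∀ x : Fin n → Bool,
      evalP b x = ∑ T ∈ Sᶜ.powerset, c (S ∪ T) * ∏ i ∈ T, (if x i then (1:ℝ) else 0) := by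
    intro x
    unfold evalP
    have hps : Sᶜ.powerset = univ.filter (fun U : Finset (Fin n) => U ⊆ Sᶜ) := by
      ext U; simp [Finset.mem_powerset]
    rw [hps, Finset.sum_filter]
    apply Finset.sum_congr rfl
    intro U _
    rw [hb]
    dsimp only
    split
    · rfl
    · rw [zero_mul]
  have hgoalsum : ∑ x ∈ univ.filter (fun x : Fin n → Bool =>
        (∑ T ∈ Sᶜ.powerset, c (S ∪ T) * ∏ i ∈ T, (if x i then (1 : ℝ) else 0)) ≠ 0),
        D x = ∑ x, (if evalP b x ≠ 0 then D x else 0) := by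
    rw [Finset.sum_filter]
    apply Finset.sum_congr rfl
    intro x _
    rw [hevalid x]
  rw [hgoalsum]
  -- sparsity comparison
  set tb := (univ.filter (fun U => b U ≠ 0)).card with htb
  have htbpos : 1 ≤ tb := by
    rw [htb, Nat.one_le_iff_ne_zero, ← Nat.pos_iff_ne_zero, Finset.card_pos]
    exact ⟨Ts, by simp [hTsmem.2]⟩
  have htble : tb ≤ t := by
    have h1 : tb ≤ (univ.filter (fun T : Finset (Fin n) => c T ≠ 0)).card := by
      apply Finset.card_le_card_of_injOn (fun U => S ∪ U)
      · intro U hU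
        simp only [Finset.mem_coe, Finset.mem_filter, Finset.mem_univ, true_and] at hU ⊢
        rw [hb] at hU
        dsimp only at hU
        by_cases hsub : U ⊆ Sᶜ
        · rwa [if_pos hsub] at hU
        · rw [if_neg hsub] at hU; exact absurd rfl hU
      · intro U hU U' hU' heq
        simp only [Finset.coe_filter, Set.mem_setOf_eq] at hU hU'
        have hsubU : U ⊆ Sᶜ := by
          by_contra hsub
          rw [hb] at hU; dsimp only at hU; rw [if_neg hsub] at hU
          exact hU.2 rfl
        have hsubU' : U' ⊆ Sᶜ := by
          by_contra hsub
          rw [hb] at hU'; dsimp only at hU'; rw [if_neg hsub] at hU'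
          exact hU'.2 rfl
        simp only at heq
        ext j
        constructor
        · intro hj
          have hjc : j ∉ S := by
            have := hsubU hj
            simpa using this
          have : j ∈ S ∪ U' := heq ▸ (Finset.mem_union_right S hj)
          rcases Finset.mem_union.mp this with h | h
          · exact absurd h hjc
          · exact h
        · intro hj
          have hjc : j ∉ S := by
            have := hsubU' hj
            simpa using this
          have : j ∈ S ∪ U := heq ▸ (Finset.mem_union_right S hj)
          rcases Finset.mem_union.mp this with h | h
          · exact absurd h hjc
          · exact h
    exact h1.trans hsparse
  -- exponent comparison
  have hTscard : (Ts.card : ℝ) ≤ (d:ℝ) - S.card := by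
    have h1 : Ts.card ≤ T₀.card := Finset.card_le_card hTsmem.1
    have h2 : Ts.card ≤ d - S.card := h1.trans hT₀card
    have h3 : ((d - S.card : ℕ) : ℝ) = (d:ℝ) - S.card := by
      rw [Nat.cast_sub hSd]
    rw [← h3]
    exact_mod_cast h2
  have hlogble : Real.logb 2 (tb:ℝ) ≤ Real.logb 2 (t:ℝ) :=
    Real.logb_le_logb_of_le (by norm_num) (by exact_mod_cast htbpos)
      (by exact_mod_cast htble)
  have hexple : (Ts.card : ℝ) + Real.logb 2 (tb:ℝ)
      ≤ (d:ℝ) - S.card + Real.logb 2 (t:ℝ) := by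
    linarith
  calc (1 / (1 + α)) ^ ((d : ℝ) - S.card + Real.logb 2 t)
      ≤ (1 / (1 + α)) ^ ((Ts.card : ℝ) + Real.logb 2 (tb:ℝ)) :=
        Real.rpow_le_rpow_of_exponent_ge hq0 hq1 hexple
    _ ≤ ∑ x, (if evalP b x ≠ 0 then D x else 0) := hmain
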